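/- For any finite graph G and any edge e = {u,v} of G, Z(G) = Z(G − e) − Z(G \ N[e]), where G − e is G with the edge e removed and N[e] = N[u] ∪ N[v]. -/

import Mathlib

open scoped Classical

noncomputable section

/-- The (unreduced) Euler characteristic of the independence complex `Ind(G)`. -/
def eulerCharInd {V : Type*} [Fintype V] (G : SimpleGraph V) : ℤ :=
  ∑ s ∈ Finset.univ.filter
      (fun s : Finset V => s.Nonempty ∧ ∀ u ∈ s, ∀ w ∈ s, ¬ G.Adj u w),
    (-1 : ℤ) ^ (s.card - 1)

/-- The Witten index `Z(G) = 1 - χ(Ind(G))`. -/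
def wittenInd {V : Type*} [Fintype V] (G : SimpleGraph V) : ℤ := 1 - eulerCharInd G

/-- Sum over all independent sets (including the empty one). -/
def Zsum {V : Type*} [Fintype V] (G : SimpleGraph V) : ℤ :=
  ∑ s ∈ Finset.univ.filter
      (fun s : Finset V => ∀ a ∈ s, ∀ b ∈ s, ¬ G.Adj a b),
    (-1 : ℤ) ^ s.card

lemma wittenInd_eq_Zsum {V : Type*} [Fintype V] (G : SimpleGraph V) :
    wittenInd G = Zsum G := by
  classical
  have hsplit : Finset.univ.filter (fun s : Finset V => ∀ a ∈ s, ∀ b ∈ s, ¬ G.Adj a b)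
      = insert (∅ : Finset V)
          (Finset.univ.filter
            (fun s : Finset V => s.Nonempty ∧ ∀ a ∈ s, ∀ b ∈ s, ¬ G.Adj a b)) := by
    ext s
    simp only [Finset.mem_filter, Finset.mem_univ, true_and, Finset.mem_insert]
    constructor
    · intro hs
      rcases eq_or_ne s ∅ with rfl | hne
      · exact Or.inl rfl
      · exact Or.inr ⟨Finset.nonempty_of_ne_empty hne, hs⟩
    · rintro (rfl | ⟨-, hs⟩)
      · simp
      · exact hs
  have hnot : (∅ : Finset V) ∉ Finset.univ.filter
      (fun s : Finset V => s.Nonempty ∧ ∀ a ∈ s, ∀ b ∈ s, ¬ G.Adj a b) := by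
    simp
  rw [wittenInd, Zsum, hsplit, Finset.sum_insert hnot, eulerCharInd]
  have : ∀ s ∈ Finset.univ.filter
      (fun s : Finset V => s.Nonempty ∧ ∀ a ∈ s, ∀ b ∈ s, ¬ G.Adj a b),
      (-1 : ℤ) ^ s.card = -(-1 : ℤ) ^ (s.card - 1) := by
    intro s hs
    have hpos : 0 < s.card :=
      Finset.card_pos.mpr (Finset.mem_filter.mp hs).2.1
    conv_lhs => rw [(Nat.succ_pred_eq_of_pos hpos).symm]
    rw [pow_succ, Nat.pred_eq_sub_one]
    ring
  rw [Finset.sum_congr rfl this, Finset.card_empty, pow_zero, Finset.sum_neg_distrib]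
  ring

lemma Zsum_induce {V : Type*} [Fintype V] (G : SimpleGraph V) (W : Set V) [Fintype ↥W] :
    Zsum (G.induce W)
      = ∑ t ∈ Finset.univ.filter
          (fun t : Finset V => (∀ x ∈ t, x ∈ W) ∧ ∀ a ∈ t, ∀ b ∈ t, ¬ G.Adj a b),
        (-1 : ℤ) ^ t.card := by
  classical
  rw [Zsum]
  refine Finset.sum_nbij' (fun s : Finset W => s.map (Function.Embedding.subtype _))
    (fun t : Finset V => t.subtype (· ∈ W)) ?_ ?_ ?_ ?_ ?_
  · intro s hs
    simp only [Finset.mem_filter, Finset.mem_univ, true_and] at hs ⊢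
    constructor
    · intro x hx
      simp only [Finset.mem_map, Function.Embedding.coe_subtype] at hx
      obtain ⟨⟨x, hxW⟩, -, rfl⟩ := hx
      exact hxW
    · intro a ha b hb hab
      simp only [Finset.mem_map, Function.Embedding.coe_subtype] at ha hb
      obtain ⟨⟨a, haW⟩, ha, rfl⟩ := ha
      obtain ⟨⟨b, hbW⟩, hb, rfl⟩ := hb
      exact hs ⟨a, haW⟩ ha ⟨b, hbW⟩ hb hab
  · intro t ht
    simp only [Finset.mem_filter, Finset.mem_univ, true_and] at ht ⊢
    intro a ha b hb hab
    simp only [Finset.mem_subtype] at ha hb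
    exact ht.2 a ha b hb hab
  · intro s hs
    ext ⟨x, hx⟩
    simp only [Finset.mem_subtype, Finset.mem_map, Function.Embedding.coe_subtype]
    constructor
    · rintro ⟨⟨y, hy⟩, hys, hyx⟩
      cases hyx
      exact hys
    · intro hxs
      exact ⟨⟨x, hx⟩, hxs, rfl⟩
  · intro t ht
    simp only [Finset.mem_filter, Finset.mem_univ, true_and] at ht
    rw [Finset.subtype_map]
    exact Finset.filter_true_of_mem ht.1
  · intro s hs
    rw [Finset.card_map]

theorem stmt_1 {V : Type*} [Fintype V] (G : SimpleGraph V) (u v : V) (h : G.Adj u v) :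
    wittenInd G =
      wittenInd (G.deleteEdges {s(u, v)}) -
        wittenInd (G.induce ((G.neighborSet u ∪ {u} ∪ G.neighborSet v ∪ {v})ᶜ)) := by
  classical
  set W : Set V := (G.neighborSet u ∪ {u} ∪ G.neighborSet v ∪ {v})ᶜ with hW
  have huv : u ≠ v := h.ne
  have huW : u ∉ W := by simp [hW]
  have hvW : v ∉ W := by simp [hW]
  set D := G.deleteEdges {s(u, v)} with hD
  have hDadj : ∀ a b : V, D.Adj a b ↔ G.Adj a b ∧ s(a, b) ≠ s(u, v) := by
    intro a b
    rw [hD, SimpleGraph.deleteEdges_adj]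
    simp
  have hedge : ∀ s : Finset V, (∀ a ∈ s, ∀ b ∈ s, ¬ D.Adj a b) →
      ∀ a ∈ s, ∀ b ∈ s, G.Adj a b → (a = u ∧ b = v) ∨ (a = v ∧ b = u) := by
    intro s hs a ha b hb hab
    have := hs a ha b hb
    rw [hDadj] at this
    have : s(a, b) = s(u, v) := by tauto
    rwa [Sym2.eq_iff] at this
  have hsplit : Finset.univ.filter (fun s : Finset V => ∀ a ∈ s, ∀ b ∈ s, ¬ D.Adj a b)
      = Finset.univ.filter (fun s : Finset V => ∀ a ∈ s, ∀ b ∈ s, ¬ G.Adj a b) ∪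
        Finset.univ.filter
          (fun s : Finset V => (∀ a ∈ s, ∀ b ∈ s, ¬ D.Adj a b) ∧
            ¬ ∀ a ∈ s, ∀ b ∈ s, ¬ G.Adj a b) := by
    ext s
    simp only [Finset.mem_filter, Finset.mem_univ, true_and, Finset.mem_union]
    constructor
    · intro hs
      by_cases hp : ∀ a ∈ s, ∀ b ∈ s, ¬ G.Adj a b
      · exact Or.inl hp
      · exact Or.inr ⟨hs, hp⟩
    · rintro (hp | ⟨hs, -⟩)
      · intro a ha b hb hab
        rw [hDadj] at hab
        exact hp a ha b hb hab.1
      · exact hs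
  have hdisj : Disjoint
      (Finset.univ.filter (fun s : Finset V => ∀ a ∈ s, ∀ b ∈ s, ¬ G.Adj a b))
      (Finset.univ.filter
        (fun s : Finset V => (∀ a ∈ s, ∀ b ∈ s, ¬ D.Adj a b) ∧
          ¬ ∀ a ∈ s, ∀ b ∈ s, ¬ G.Adj a b)) := by
    rw [Finset.disjoint_left]
    intro s hs hs'
    simp only [Finset.mem_filter] at hs hs'
    exact hs'.2.2 hs.2
  have key : Zsum (G.induce W)
      = ∑ s ∈ Finset.univ.filter
          (fun s : Finset V => (∀ a ∈ s, ∀ b ∈ s, ¬ D.Adj a b) ∧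
            ¬ ∀ a ∈ s, ∀ b ∈ s, ¬ G.Adj a b),
        (-1 : ℤ) ^ s.card := by
    rw [Zsum_induce]
    refine Finset.sum_nbij' (fun t => insert u (insert v t)) (fun s => s \ {u, v})
      ?_ ?_ ?_ ?_ ?_
    · -- forward map lands in target
      intro t ht
      simp only [Finset.mem_filter, Finset.mem_univ, true_and] at ht ⊢
      obtain ⟨htW, htind⟩ := ht
      have hut : u ∉ t := fun hu => huW (htW u hu)
      have hvt : v ∉ t := fun hv => hvW (htW v hv)
      constructor
      · intro a ha b hb hab
        rw [hDadj] at hab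
        obtain ⟨hab, hne⟩ := hab
        simp only [Finset.mem_insert] at ha hb
        have hWnadj : ∀ x ∈ t, ¬ G.Adj u x ∧ ¬ G.Adj v x := by
          intro x hx
          have := htW x hx
          simp only [hW, Set.mem_compl_iff, Set.mem_union, SimpleGraph.mem_neighborSet,
            Set.mem_singleton_iff] at this
          push_neg at this
          exact ⟨this.1.1.1, this.1.2⟩
        rcases ha with rfl | rfl | ha
        · rcases hb with rfl | rfl | hb
          · exact hab.ne rfl
          · exact hne rfl
          · exact (hWnadj b hb).1 hab
        · rcases hb with rfl | rfl | hb
          · exact hne (Sym2.eq_swap)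
          · exact hab.ne rfl
          · exact (hWnadj b hb).2 hab
        · rcases hb with rfl | rfl | hb
          · exact (hWnadj a ha).1 hab.symm
          · exact (hWnadj a ha).2 hab.symm
          · exact htind a ha b hb hab
      · intro hp
        exact hp u (by simp) v (by simp) h
    · -- backward map lands in source
      intro s hs
      simp only [Finset.mem_filter, Finset.mem_univ, true_and] at hs ⊢
      obtain ⟨hsD, hsnp⟩ := hs
      constructor
      · intro x hx
        simp only [Finset.mem_sdiff, Finset.mem_insert, Finset.mem_singleton] at hx
        obtain ⟨hxs, hxuv⟩ := hx
        push_neg at hxuv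
        simp only [hW, Set.mem_compl_iff, Set.mem_union, SimpleGraph.mem_neighborSet,
          Set.mem_singleton_iff]
        push_neg
        obtain ⟨a, ha, b, hb, hab⟩ : ∃ a ∈ s, ∃ b ∈ s, G.Adj a b := by
          by_contra hc
          push_neg at hc
          exact hsnp fun a ha b hb => hc a ha b hb
        have huvs : u ∈ s ∧ v ∈ s := by
          rcases hedge s hsD a ha b hb hab with ⟨rfl, rfl⟩ | ⟨rfl, rfl⟩
          · exact ⟨ha, hb⟩
          · exact ⟨hb, ha⟩
        refine ⟨⟨⟨?_, hxuv.1⟩, ?_⟩, hxuv.2⟩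
        · intro hadj
          rcases hedge s hsD u huvs.1 x hxs hadj with ⟨-, h2⟩ | ⟨h1, -⟩
          · exact hxuv.2 h2
          · exact huv h1
        · intro hadj
          rcases hedge s hsD v huvs.2 x hxs hadj with ⟨h1, -⟩ | ⟨-, h2⟩
          · exact huv h1.symm
          · exact hxuv.1 h2
      · intro a ha b hb hab
        simp only [Finset.mem_sdiff, Finset.mem_insert, Finset.mem_singleton] at ha hb
        push_neg at ha hb
        rcases hedge s hsD a ha.1 b hb.1 hab with ⟨h1, -⟩ | ⟨h1, -⟩
        · exact ha.2.1 h1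
        · exact ha.2.2 h1
    · -- left inverse
      intro t ht
      simp only [Finset.mem_filter, Finset.mem_univ, true_and] at ht
      have hut : u ∉ t := fun hu => huW (ht.1 u hu)
      have hvt : v ∉ t := fun hv => hvW (ht.1 v hv)
      ext x
      simp only [Finset.mem_sdiff, Finset.mem_insert, Finset.mem_singleton]
      constructor
      · rintro ⟨rfl | rfl | hx, hne⟩ <;> tauto
      · intro hx
        refine ⟨Or.inr (Or.inr hx), ?_⟩
        rintro (rfl | rfl) <;> tauto
    · -- right inverse
      intro s hs
      simp only [Finset.mem_filter, Finset.mem_univ, true_and] at hs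
      obtain ⟨hsD, hsnp⟩ := hs
      obtain ⟨a, ha, b, hb, hab⟩ : ∃ a ∈ s, ∃ b ∈ s, G.Adj a b := by
        by_contra hc
        push_neg at hc
        exact hsnp fun a ha b hb => hc a ha b hb
      have huvs : u ∈ s ∧ v ∈ s := by
        rcases hedge s hsD a ha b hb hab with ⟨rfl, rfl⟩ | ⟨rfl, rfl⟩
        · exact ⟨ha, hb⟩
        · exact ⟨hb, ha⟩
      ext x
      simp only [Finset.mem_insert, Finset.mem_sdiff, Finset.mem_singleton]
      constructor
      · rintro (rfl | rfl | ⟨hx, -⟩)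
        · exact huvs.1
        · exact huvs.2
        · exact hx
      · intro hx
        by_cases hxu : x = u
        · exact Or.inl hxu
        by_cases hxv : x = v
        · exact Or.inr (Or.inl hxv)
        · exact Or.inr (Or.inr ⟨hx, by tauto⟩)
    · -- powers agree
      intro t ht
      simp only [Finset.mem_filter, Finset.mem_univ, true_and] at ht
      have hut : u ∉ t := fun hu => huW (ht.1 u hu)
      have hvt : v ∉ t := fun hv => hvW (ht.1 v hv)
      have : (insert u (insert v t)).card = t.card + 2 := by
        rw [Finset.card_insert_of_notMem (by simp [huv, hut]),
          Finset.card_insert_of_notMem hvt]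
      rw [this, pow_add]
      norm_num
  rw [wittenInd_eq_Zsum, wittenInd_eq_Zsum, wittenInd_eq_Zsum, key, Zsum, Zsum]
  have hsum := Finset.sum_union (f := fun s : Finset V => (-1 : ℤ) ^ s.card) hdisj
  rw [← hsplit] at hsum
  convert eq_sub_of_add_eq hsum.symm
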